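/- Let a, b_1,...,b_6 be integers with 3a + Σ_{i=1}^6 b_i = 0 and for all 1 ≤ i < j ≤ 6, a + b_i + b_j ≤ 1 and 2a + (sum of the four b_k with k ∉ {i,j}) ≤ 0. Then a + b_i + b_j = 0 for all 1 ≤ i < j ≤ 6. -/
import Mathlib


/-- Integers a, b₁,…,b₆ with 3a + Σbᵢ = 0, and for all i < j:
a + bᵢ + bⱼ ≤ 1 and 2a + (sum of the four bₖ with k ∉ {i,j}) ≤ 0.
Then a + bᵢ + bⱼ = 0 for all i < j. -/
theorem stmt_3 (a : ℤ) (b : Fin 6 → ℤ)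
    (hsum : 3 * a + ∑ i, b i = 0)
    (h1 : ∀ i j : Fin 6, i < j → a + b i + b j ≤ 1)
    (h2 : ∀ i j : Fin 6, i < j → 2 * a + ∑ k ∈ Finset.univ \ {i, j}, b k ≤ 0) :
    ∀ i j : Fin 6, i < j → a + b i + b j = 0 := by
  have key : ∀ p ∈ (Finset.univ : Finset (Fin 6 × Fin 6)).filter (fun p => p.1 < p.2),
      0 ≤ a + b p.1 + b p.2 := by
    rintro ⟨i, j⟩ hp
    simp only [Finset.mem_filter, Finset.mem_univ, true_and] at hp
    have h := h2 i j hp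
    rw [Finset.sum_sdiff_eq_sub (Finset.subset_univ _), Finset.sum_pair hp.ne] at h
    linarith
  have hT : ∑ p ∈ (Finset.univ : Finset (Fin 6 × Fin 6)).filter (fun p => p.1 < p.2),
      (a + b p.1 + b p.2) = 0 := by
    rw [Fin.sum_univ_six] at hsum
    rw [Finset.sum_filter]
    rw [Fintype.sum_prod_type]
    simp only [Fin.sum_univ_six]
    simp only [Fin.lt_def, Fin.ext_iff, show ((0:Fin 6).val)=0 from rfl, show ((1:Fin 6).val)=1 from rfl, show ((2:Fin 6).val)=2 from rfl, show ((3:Fin 6).val)=3 from rfl, show ((4:Fin 6).val)=4 from rfl, show ((5:Fin 6).val)=5 from rfl]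
    norm_num
    linarith
  intro i j hij
  have hmem : (i, j) ∈ (Finset.univ : Finset (Fin 6 × Fin 6)).filter (fun p => p.1 < p.2) := by
    simp [hij]
  exact (Finset.sum_eq_zero_iff_of_nonneg key).1 hT (i, j) hmem
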